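/- (η′-transfer) Assume the Beck–Chevalley property. Then BC₁ ∘ η′ = η_f as natural transformations Id_{ℰ_B} ⟶ f^* ∘ f_!; componentwise, (BC₁)_X ∘ η'_X = (η_f)_X for every object X of ℰ_B. -/

import Mathlib

open CategoryTheory

universe v' u' v u

namespace BRPaper

variable (C : Type u) [Category.{v} C] (E : C → Type u') [∀ A, Category.{v'} (E A)]

/-- A cloven bifibration over `C`, modeled as a contravariant pseudofunctor `pull`
(with coherence isomorphisms `ι`, `κ` satisfying the pseudofunctor axioms)
together with chosen left adjoints `push f ⊣ pull f`. -/
structure ClovenBifib where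
  pull : ∀ {B A : C}, (B ⟶ A) → (E A ⥤ E B)
  ι : ∀ B : C, 𝟭 (E B) ≅ pull (𝟙 B)
  κ : ∀ {X Y Z : C} (f : Y ⟶ Z) (g : X ⟶ Y), pull f ⋙ pull g ≅ pull (g ≫ f)
  push : ∀ {B A : C}, (B ⟶ A) → (E B ⥤ E A)
  adj : ∀ {B A : C} (f : B ⟶ A), push f ⊣ pull f
  κ_id_left : ∀ {B A : C} (f : B ⟶ A),
    Functor.whiskerLeft (pull f) (ι B).hom ≫ (κ f (𝟙 B)).hom =
      eqToHom (by rw [Category.id_comp, Functor.comp_id])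
  κ_id_right : ∀ {B A : C} (g : B ⟶ A),
    Functor.whiskerRight (ι A).hom (pull g) ≫ (κ (𝟙 A) g).hom =
      eqToHom (by rw [Category.comp_id, Functor.id_comp])
  κ_assoc : ∀ {X Y Z W : C} (f : Z ⟶ W) (g : Y ⟶ Z) (h : X ⟶ Y),
    Functor.whiskerRight (κ f g).hom (pull h) ≫ (κ (g ≫ f) h).hom =
      Functor.whiskerLeft (pull f) (κ g h).hom ≫ (κ f (h ≫ g)).hom ≫
        eqToHom (by rw [Category.assoc])

variable {C E}
variable (P : ClovenBifib C E)

namespace ClovenBifib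

/-- The mate of a 2-cell `θ : g^* ∘ e^* ⟶ k^* ∘ h^*`. -/
def mate {A₀ B₀ C₀ D₀ : C} {e : B₀ ⟶ A₀} {g : C₀ ⟶ B₀} {k : C₀ ⟶ D₀} {h : D₀ ⟶ A₀}
    (θ : P.pull e ⋙ P.pull g ⟶ P.pull h ⋙ P.pull k) :
    P.pull g ⋙ P.push k ⟶ P.push e ⋙ P.pull h :=
  Functor.whiskerRight (P.adj e).unit (P.pull g ⋙ P.push k) ≫
    Functor.whiskerRight (Functor.whiskerLeft (P.push e) θ) (P.push k) ≫
    Functor.whiskerLeft (P.push e ⋙ P.pull h) (P.adj k).counit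

/-- The two-fold mate of a 2-cell `θ : g^* ∘ e^* ⟶ k^* ∘ h^*`. -/
def twoMate {A₀ B₀ C₀ D₀ : C} {e : B₀ ⟶ A₀} {g : C₀ ⟶ B₀} {k : C₀ ⟶ D₀} {h : D₀ ⟶ A₀}
    (θ : P.pull e ⋙ P.pull g ⟶ P.pull h ⋙ P.pull k) :
    P.push k ⋙ P.push h ⟶ P.push g ⋙ P.push e :=
  Functor.whiskerRight (P.adj g).unit (P.push k ⋙ P.push h) ≫
    Functor.whiskerRight (Functor.whiskerLeft (P.push g) (P.mate θ)) (P.push h) ≫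
    Functor.whiskerLeft (P.push g ⋙ P.push e) (P.adj h).counit

/-- The Beck–Chevalley transformation of a commutative square `a ≫ d = c ≫ b`. -/
def BC {A₀ B₀ C₀ D₀ : C} (a : A₀ ⟶ B₀) (c : A₀ ⟶ C₀) (d : B₀ ⟶ D₀) (b : C₀ ⟶ D₀)
    (sq : a ≫ d = c ≫ b) :
    P.pull a ⋙ P.push c ⟶ P.push d ⋙ P.pull b :=
  P.mate ((P.κ d a).hom ≫ eqToHom (by rw [sq]) ≫ (P.κ b c).inv)

/-- The Beck–Chevalley property: the Beck–Chevalley transformation of every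
pullback square is an isomorphism. -/
def BCCond : Prop :=
  ∀ ⦃A₀ B₀ C₀ D₀ : C⦄ (a : A₀ ⟶ B₀) (c : A₀ ⟶ C₀) (d : B₀ ⟶ D₀) (b : C₀ ⟶ D₀)
    (sq : a ≫ d = c ≫ b), IsPullback a c d b → IsIso (P.BC a c d b sq)

/-- The inverse (backward) Beck–Chevalley transformation. -/
noncomputable def BCinv {A₀ B₀ C₀ D₀ : C} (a : A₀ ⟶ B₀) (c : A₀ ⟶ C₀) (d : B₀ ⟶ D₀)
    (b : C₀ ⟶ D₀) (sq : a ≫ d = c ≫ b) (hiso : IsIso (P.BC a c d b sq)) :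
    P.push d ⋙ P.pull b ⟶ P.pull a ⋙ P.push c :=
  @CategoryTheory.inv _ _ _ _ (P.BC a c d b sq) hiso

variable {A B : C}

/-- The canonical isomorphism `χ₁ : f₁^* ∘ f^* ≅ f₂^* ∘ f^*` for the kernel pair of `f`. -/
def chi1 (f : B ⟶ A) {BAB : C} (f₁ f₂ : BAB ⟶ B) (hf : f₁ ≫ f = f₂ ≫ f) :
    P.pull f ⋙ P.pull f₁ ≅ P.pull f ⋙ P.pull f₂ :=
  P.κ f f₁ ≪≫ eqToIso (by rw [hf]) ≪≫ (P.κ f f₂).symm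

/-- The canonical isomorphism `d_i : Id ≅ Δ^* ∘ f_i^*`. -/
def dIso {BAB : C} (fi : BAB ⟶ B) (Δ : B ⟶ BAB) (hΔ : Δ ≫ fi = 𝟙 B) :
    𝟭 (E B) ≅ P.pull fi ⋙ P.pull Δ :=
  P.ι B ≪≫ eqToIso (by rw [hΔ]) ≪≫ (P.κ fi Δ).symm

/-- The canonical isomorphism `j_i : π^* ∘ f_i^* ≅ π'^* ∘ f_i^*`. -/
def jIso {BAB Q : C} (fi : BAB ⟶ B) (π π' : Q ⟶ BAB) (hπ : π ≫ fi = π' ≫ fi) :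
    P.pull fi ⋙ P.pull π ≅ P.pull fi ⋙ P.pull π' :=
  P.κ fi π ≪≫ eqToIso (by rw [hπ]) ≪≫ (P.κ fi π').symm

/-- The canonical isomorphism `j : π₂^* ∘ f₂^* ≅ π₁^* ∘ f₁^*`. -/
def jCross {BAB Q : C} (f₁ f₂ : BAB ⟶ B) (π₁ π₂ : Q ⟶ BAB) (hππ : π₂ ≫ f₂ = π₁ ≫ f₁) :
    P.pull f₂ ⋙ P.pull π₂ ≅ P.pull f₁ ⋙ P.pull π₁ :=
  P.κ f₂ π₂ ≪≫ eqToIso (by rw [hππ]) ≪≫ (P.κ f₁ π₁).symm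

/-- Multiplication of the monad `T_f = f^* ∘ f_!`. -/
def Tmul (f : B ⟶ A) (X : E B) :
    (P.pull f).obj ((P.push f).obj ((P.pull f).obj ((P.push f).obj X))) ⟶
      (P.pull f).obj ((P.push f).obj X) :=
  (P.pull f).map ((P.adj f).counit.app ((P.push f).obj X))

/-- `φ := f₂^*(α) ∘ (χ₁)_{f_! X} ∘ f₁^*((η_f)_X)`. -/
def phi (f : B ⟶ A) {BAB : C} (f₁ f₂ : BAB ⟶ B) (hf : f₁ ≫ f = f₂ ≫ f)
    (X : E B) (α : (P.pull f).obj ((P.push f).obj X) ⟶ X) :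
    (P.pull f₁).obj X ⟶ (P.pull f₂).obj X :=
  (P.pull f₁).map ((P.adj f).unit.app X) ≫
    (P.chi1 f f₁ f₂ hf).hom.app ((P.push f).obj X) ≫ (P.pull f₂).map α

/-- `ψ := f₁^*(α) ∘ (χ₁⁻¹)_{f_! X} ∘ f₂^*((η_f)_X)`. -/
def psi (f : B ⟶ A) {BAB : C} (f₁ f₂ : BAB ⟶ B) (hf : f₁ ≫ f = f₂ ≫ f)
    (X : E B) (α : (P.pull f).obj ((P.push f).obj X) ⟶ X) :
    (P.pull f₂).obj X ⟶ (P.pull f₁).obj X :=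
  (P.pull f₂).map ((P.adj f).unit.app X) ≫
    (P.chi1 f f₁ f₂ hf).inv.app ((P.push f).obj X) ≫ (P.pull f₁).map α

/-- `β := (ε_{f₂})_X ∘ (f₂)_!(φ)`. -/
def betaMap {BAB : C} (f₁ f₂ : BAB ⟶ B) (X : E B)
    (φ : (P.pull f₁).obj X ⟶ (P.pull f₂).obj X) :
    (P.push f₂).obj ((P.pull f₁).obj X) ⟶ X :=
  (P.push f₂).map φ ≫ (P.adj f₂).counit.app X

/-- The unit `η'` of the monad `(f₂)_! ∘ f₁^*`. -/
def eta' {BAB : C} (f₁ f₂ : BAB ⟶ B) (Δ : B ⟶ BAB)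
    (hΔ₁ : Δ ≫ f₁ = 𝟙 B) (hΔ₂ : Δ ≫ f₂ = 𝟙 B) (X : E B) :
    X ⟶ (P.push f₂).obj ((P.pull f₁).obj X) :=
  (P.dIso f₁ Δ hΔ₁).hom.app X ≫
    (P.pull Δ).map ((P.adj f₂).unit.app ((P.pull f₁).obj X)) ≫
    (P.dIso f₂ Δ hΔ₂).inv.app ((P.push f₂).obj ((P.pull f₁).obj X))

/-- `k₂ : (f₂)_! ∘ (π₁)_! ⟶ (f₂)_! ∘ π_!`, the two-fold mate of `j₂`. -/
def kTwo {BAB Q : C} (f₂ : BAB ⟶ B) (π π₁ : Q ⟶ BAB) (hπ₂ : π ≫ f₂ = π₁ ≫ f₂) :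
    P.push π₁ ⋙ P.push f₂ ⟶ P.push π ⋙ P.push f₂ :=
  P.twoMate (P.jIso f₂ π π₁ hπ₂).hom

/-- The multiplication `μ'` of the monad `(f₂)_! ∘ f₁^*`. -/
noncomputable def mu' {BAB Q : C} (f₁ f₂ : BAB ⟶ B) (π₁ π₂ π : Q ⟶ BAB)
    (hππ : π₂ ≫ f₂ = π₁ ≫ f₁) (hπ₁ : π ≫ f₁ = π₂ ≫ f₁) (hπ₂ : π ≫ f₂ = π₁ ≫ f₂)
    (hiso : IsIso (P.BC π₂ π₁ f₂ f₁ hππ)) (X : E B) :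
    (P.push f₂).obj ((P.pull f₁).obj ((P.push f₂).obj ((P.pull f₁).obj X))) ⟶
      (P.push f₂).obj ((P.pull f₁).obj X) :=
  (P.push f₂).map ((P.BCinv π₂ π₁ f₂ f₁ hππ hiso).app ((P.pull f₁).obj X)) ≫
    (P.push f₂).map ((P.push π₁).map ((P.jIso f₁ π π₂ hπ₁).inv.app X)) ≫
    (P.kTwo f₂ π π₁ hπ₂).app ((P.pull π).obj ((P.pull f₁).obj X)) ≫
    (P.push f₂).map ((P.adj π).counit.app ((P.pull f₁).obj X))

end ClovenBifib

end BRPaper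

open BRPaper ClovenBifib CategoryTheory


section Aux

variable {C : Type u} [Category.{v} C] {E : C → Type u'} [∀ A, Category.{v'} (E A)]
  (P : BRPaper.ClovenBifib C E)

lemma kappa_assoc_app {X Y Z W : C} (f : Z ⟶ W) (g : Y ⟶ Z) (h : X ⟶ Y) (W0 : E W) :
    (P.pull h).map ((P.κ f g).hom.app W0) ≫ (P.κ (g ≫ f) h).hom.app W0 =
      (P.κ g h).hom.app ((P.pull f).obj W0) ≫ (P.κ f (h ≫ g)).hom.app W0 ≫
        eqToHom (by rw [Category.assoc]) := by
  have h1 := NatTrans.congr_app (P.κ_assoc f g h) W0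
  simpa [eqToHom_app] using h1

lemma kappa_id_left_app {B A : C} (f : B ⟶ A) (W : E A) :
    (P.ι B).hom.app ((P.pull f).obj W) ≫ (P.κ f (𝟙 B)).hom.app W =
      eqToHom (by rw [Category.id_comp]; rfl) := by
  have h1 := NatTrans.congr_app (P.κ_id_left f) W
  simpa [eqToHom_app] using h1

lemma kappa_congr_right {X Y Z : C} (f : Y ⟶ Z) {g g' : X ⟶ Y} (h : g = g') (W : E Z) :
    (eqToHom (by rw [h]) :
        (P.pull g).obj ((P.pull f).obj W) ⟶ (P.pull g').obj ((P.pull f).obj W)) ≫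
      (P.κ f g').hom.app W =
      (P.κ f g).hom.app W ≫ eqToHom (by rw [h]) := by
  subst h; simp

lemma kappa_congr_left {X Y Z : C} {f f' : Y ⟶ Z} (h : f = f') (g : X ⟶ Y) (W : E Z) :
    (P.κ f g).inv.app W ≫
        (eqToHom (by rw [h]) :
          (P.pull g).obj ((P.pull f).obj W) ⟶ (P.pull g).obj ((P.pull f').obj W)) =
      eqToHom (by rw [h]) ≫ (P.κ f' g).inv.app W := by
  subst h; simp

lemma dIso_pull_kappa {A B BAB : C} (f : B ⟶ A) (fi : BAB ⟶ B) (Δ : B ⟶ BAB)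
    (hΔ : Δ ≫ fi = 𝟙 B) (W : E A) :
    (P.dIso fi Δ hΔ).hom.app ((P.pull f).obj W) ≫ (P.pull Δ).map ((P.κ f fi).hom.app W) =
      eqToHom (by rw [← Category.assoc, hΔ, Category.id_comp]; rfl) ≫
        (P.κ (fi ≫ f) Δ).inv.app W := by
  have hassoc := kappa_assoc_app P f fi Δ W
  have hpull : (P.pull Δ).map ((P.κ f fi).hom.app W) =
      ((P.κ fi Δ).hom.app ((P.pull f).obj W) ≫ (P.κ f (Δ ≫ fi)).hom.app W ≫
        eqToHom (by rw [Category.assoc])) ≫ (P.κ (fi ≫ f) Δ).inv.app W := by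
    rw [← hassoc, Category.assoc, Iso.hom_inv_id_app]; simp
  rw [hpull]
  simp only [ClovenBifib.dIso, Iso.trans_hom, eqToIso.hom, Iso.symm_hom, NatTrans.comp_app,
    eqToHom_app, Category.assoc, Iso.inv_hom_id_app_assoc]
  rw [reassoc_of% kappa_congr_right P f hΔ.symm W,
    reassoc_of% kappa_id_left_app P f W]
  simp [eqToHom_trans]

end Aux

/-- **η′-transfer.** Assume the Beck–Chevalley property. Then
`BC₁ ∘ η′ = η_f`, componentwise: `(BC₁)_X ∘ η'_X = (η_f)_X` for every `X`. -/
theorem benabou_roubaud_eta'_transfer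
    {C : Type u} [Category.{v} C] [Limits.HasPullbacks C]
    {E : C → Type u'} [∀ A, Category.{v'} (E A)] (P : ClovenBifib C E)
    (hBC : P.BCCond)
    {A B : C} (f : B ⟶ A) {BAB : C} (f₁ f₂ : BAB ⟶ B)
    (hf : f₁ ≫ f = f₂ ≫ f) (hkp : IsPullback f₁ f₂ f f)
    (Δ : B ⟶ BAB) (hΔ₁ : Δ ≫ f₁ = 𝟙 B) (hΔ₂ : Δ ≫ f₂ = 𝟙 B) :
    ∀ X : E B,
      P.eta' f₁ f₂ Δ hΔ₁ hΔ₂ X ≫ (P.BC f₁ f₂ f f hf).app X =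
        (P.adj f).unit.app X := by
  intro X
  set W := (P.push f).obj X with hW
  set ηX := (P.adj f).unit.app X with hηX
  set u : (P.pull f₁).obj X ⟶ (P.pull f₂).obj ((P.pull f).obj W) :=
    (P.pull f₁).map ηX ≫ (P.κ f f₁).hom.app W ≫
      (eqToHom (by rw [hf] : (P.pull (f₁ ≫ f)).obj W = (P.pull (f₂ ≫ f)).obj W)) ≫
      (P.κ f f₂).inv.app W with hu
  have hBCX : (P.BC f₁ f₂ f f hf).app X =
      (P.push f₂).map u ≫ (P.adj f₂).counit.app ((P.pull f).obj W) := by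
    rw [hu]
    simp [ClovenBifib.BC, ClovenBifib.mate, eqToHom_app]
    rfl
  simp only [ClovenBifib.eta']
  rw [hBCX]
  simp only [Category.assoc]
  have hg := ((P.dIso f₂ Δ hΔ₂).inv.naturality
    ((P.push f₂).map u ≫ (P.adj f₂).counit.app ((P.pull f).obj W))).symm
  simp only [Functor.id_obj, Functor.id_map, Functor.comp_obj, Functor.comp_map,
    Functor.map_comp, Category.assoc] at hg
  rw [hg]
  have h1 := (P.adj f₂).unit.naturality u
  simp only [Functor.id_obj, Functor.id_map, Functor.comp_obj, Functor.comp_map] at h1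
  have hunit : (P.adj f₂).unit.app ((P.pull f₁).obj X) ≫
      (P.pull f₂).map ((P.push f₂).map u) ≫
      (P.pull f₂).map ((P.adj f₂).counit.app ((P.pull f).obj W)) = u := by
    rw [← reassoc_of% h1, Adjunction.right_triangle_components, Category.comp_id]
  have hunit2 : (P.pull Δ).map ((P.adj f₂).unit.app ((P.pull f₁).obj X)) ≫
      (P.pull Δ).map ((P.pull f₂).map ((P.push f₂).map u)) ≫
      (P.pull Δ).map ((P.pull f₂).map ((P.adj f₂).counit.app ((P.pull f).obj W))) =
      (P.pull Δ).map u := by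
    rw [← Functor.map_comp, ← Functor.map_comp, hunit]
  rw [reassoc_of% hunit2]
  rw [hu]
  simp only [Functor.map_comp, eqToHom_map, Category.assoc]
  have hd1 := ((P.dIso f₁ Δ hΔ₁).hom.naturality ηX).symm
  simp only [Functor.id_obj, Functor.id_map, Functor.comp_obj, Functor.comp_map] at hd1
  have hd1' : (P.dIso f₁ Δ hΔ₁).hom.app X ≫ (P.pull Δ).map ((P.pull f₁).map ηX) =
      ηX ≫ (P.dIso f₁ Δ hΔ₁).hom.app ((P.pull f).obj W) := hd1
  rw [reassoc_of% hd1']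
  rw [reassoc_of% dIso_pull_kappa P f f₁ Δ hΔ₁ W]
  rw [reassoc_of% kappa_congr_left P hf Δ W]
  have h2 := dIso_pull_kappa P f f₂ Δ hΔ₂ W
  have hκIinv : (P.κ (f₂ ≫ f) Δ).inv.app W =
      (eqToHom (by rw [← Category.assoc, hΔ₂, Category.id_comp]; rfl :
          (P.pull (Δ ≫ f₂ ≫ f)).obj W = (𝟭 (E B)).obj ((P.pull f).obj W))) ≫
        (P.dIso f₂ Δ hΔ₂).hom.app ((P.pull f).obj W) ≫
        (P.pull Δ).map ((P.κ f f₂).hom.app W) := by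
    rw [h2]; simp
  have hG : (P.κ (f₂ ≫ f) Δ).inv.app W ≫ (P.pull Δ).map ((P.κ f f₂).inv.app W) ≫
      (P.dIso f₂ Δ hΔ₂).inv.app ((P.pull f).obj W) =
      eqToHom (by rw [← Category.assoc, hΔ₂, Category.id_comp]; rfl) := by
    rw [hκIinv]
    simp only [Category.assoc, ← Functor.map_comp_assoc, Iso.hom_inv_id_app]
    simp
  rw [hG]
  simp [eqToHom_trans]
  exact Category.comp_id _
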